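/- arXiv:1605.03344 — 3 statements merged into one kernel-verified Lean document; each statement's English description precedes it below -/
import Mathlib

section
/- Let r and r₀ be vectors in ℝ³, and let R_r = exp([r]ₓ) and R_{r₀} = exp([r₀]ₓ) be the rotation matrices obtained by the matrix exponential of the corresponding skew-symmetric cross-product matrices. Then the angular distance between R_r and R_{r₀} satisfies arccos((trace(R_rᵀ R_{r₀}) − 1)/2) ≤ ‖r − r₀‖, i.e. the angular distance between two rotations is at most the Euclidean distance between their angle-axis representations. -/
open Matrix Real
open scoped Nat

/-- The skew-symmetric cross-product matrix of a vector `r ∈ ℝ³`. -/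
noncomputable def crossMat (r : EuclideanSpace ℝ (Fin 3)) : Matrix (Fin 3) (Fin 3) ℝ :=
  !![0, -r 2, r 1; r 2, 0, -r 0; -r 1, r 0, 0]

/-- The rotation matrix `R_r = exp([r]ₓ)` of an angle-axis vector `r ∈ ℝ³`. -/
noncomputable def rotOf (r : EuclideanSpace ℝ (Fin 3)) : Matrix (Fin 3) (Fin 3) ℝ :=
  NormedSpace.exp (crossMat r)

/-- Application of a `3 × 3` matrix to a vector of `ℝ³` (with the Euclidean norm). -/
noncomputable def mApp (A : Matrix (Fin 3) (Fin 3) ℝ) (x : EuclideanSpace ℝ (Fin 3)) :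
    EuclideanSpace ℝ (Fin 3) :=
  Matrix.toEuclideanLin A x

/-! ### Basic matrix lemmas -/

lemma crossMat_transpose (r : EuclideanSpace ℝ (Fin 3)) :
    (crossMat r)ᵀ = -crossMat r := by
  ext i j; fin_cases i <;> fin_cases j <;> simp [crossMat]

lemma crossMat_cube (r : EuclideanSpace ℝ (Fin 3)) :
    crossMat r ^ 3 = (-(r 0 ^ 2 + r 1 ^ 2 + r 2 ^ 2)) • crossMat r := by
  ext i j
  fin_cases i <;> fin_cases j <;>
    simp [crossMat, pow_succ, Matrix.mul_apply, Fin.sum_univ_three] <;> ring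

lemma norm_sq_eq (r : EuclideanSpace ℝ (Fin 3)) :
    ‖r‖ ^ 2 = r 0 ^ 2 + r 1 ^ 2 + r 2 ^ 2 := by
  rw [EuclideanSpace.norm_eq, Real.sq_sqrt (by positivity)]
  simp [Fin.sum_univ_three]

lemma inner_eq_coords (r s : EuclideanSpace ℝ (Fin 3)) :
    (inner ℝ r s : ℝ) = r 0 * s 0 + r 1 * s 1 + r 2 * s 2 := by
  simp [PiLp.inner_apply, Fin.sum_univ_three]
  ring

lemma crossMat_cube' (r : EuclideanSpace ℝ (Fin 3)) :
    crossMat r ^ 3 = (-(‖r‖ ^ 2)) • crossMat r := by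
  rw [crossMat_cube, norm_sq_eq]

lemma crossMat_pow_odd (r : EuclideanSpace ℝ (Fin 3)) (n : ℕ) :
    crossMat r ^ (2 * n + 1) = ((-(‖r‖ ^ 2)) ^ n) • crossMat r := by
  induction n with
  | zero => simp
  | succ n ih =>
      have e : 2 * (n + 1) + 1 = (2 * n + 1) + 2 := by ring
      have h3 : crossMat r * crossMat r ^ 2 = crossMat r ^ 3 := by noncomm_ring
      rw [e, pow_add, ih, smul_mul_assoc, h3, crossMat_cube', smul_smul, ← pow_succ]

lemma crossMat_pow_even (r : EuclideanSpace ℝ (Fin 3)) (n : ℕ) :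
    crossMat r ^ (2 * n + 2) = ((-(‖r‖ ^ 2)) ^ n) • crossMat r ^ 2 := by
  have e : 2 * n + 2 = (2 * n + 1) + 1 := by ring
  rw [e, pow_succ, crossMat_pow_odd, smul_mul_assoc, ← pow_two]

/-! ### Rodrigues' formula -/

theorem rodrigues (r : EuclideanSpace ℝ (Fin 3)) (hr : ‖r‖ ≠ 0) :
    rotOf r = 1 + (Real.sin ‖r‖ / ‖r‖) • crossMat r
      + ((1 - Real.cos ‖r‖) / ‖r‖ ^ 2) • crossMat r ^ 2 := by
  set a := ‖r‖ with ha
  set K := crossMat r with hK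
  have hfac : ∀ m : ℕ, ((m)! : ℝ) ≠ 0 := fun m => Nat.cast_ne_zero.2 (Nat.factorial_ne_zero m)
  have hodd : HasSum (fun n : ℕ => ((2 * n + 1)! : ℝ)⁻¹ • K ^ (2 * n + 1))
      ((Real.sin a / a) • K) := by
    have h2 := ((Real.hasSum_sin a).div_const a).smul_const K
    convert h2 using 1
    funext n
    rw [crossMat_pow_odd, smul_smul]
    congr 1
    have hn : (-(a ^ 2)) ^ n = (-1 : ℝ) ^ n * a ^ (2 * n) := by
      rw [neg_pow, pow_mul]; try ring
    rw [hn]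
    have : a ^ (2 * n + 1) = a ^ (2 * n) * a := by ring
    rw [this]
    field_simp [hfac]
    try ring
  have heven : HasSum (fun n : ℕ => ((2 * n)! : ℝ)⁻¹ • K ^ (2 * n))
      (1 + ((1 - Real.cos a) / a ^ 2) • K ^ 2) := by
    have h1 := Real.hasSum_cos a
    have h2 : HasSum (fun n : ℕ => (-1 : ℝ) ^ (n+1) * a ^ (2 * (n+1)) / ((2 * (n+1))!))
        (Real.cos a - 1) := by
      have := (hasSum_nat_add_iff (f := fun n : ℕ => (-1 : ℝ) ^ n * a ^ (2 * n) / ((2 * n)!)) 1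
        (g := Real.cos a - 1))
      rw [this]
      simpa using h1
    have h3 := (h2.mul_left (-(a ^ 2)⁻¹)).smul_const (K ^ 2)
    have hsum : (-(a^2)⁻¹) * (Real.cos a - 1) = (1 - Real.cos a) / a ^ 2 := by
      field_simp
      ring
    rw [hsum] at h3
    have h4 : HasSum (fun n : ℕ => ((2 * (n+1))! : ℝ)⁻¹ • K ^ (2 * (n+1)))
        (((1 - Real.cos a) / a ^ 2) • K ^ 2) := by
      convert h3 using 1
      funext n
      have h2n : 2 * (n + 1) = 2 * n + 2 := by ring
      rw [h2n, crossMat_pow_even, smul_smul]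
      congr 1
      have hn : (-(a ^ 2)) ^ n = (-1 : ℝ) ^ n * a ^ (2 * n) := by
        rw [neg_pow, pow_mul]; try ring
      rw [hn]
      have hp1 : (-1 : ℝ) ^ (n + 1) = (-1) ^ n * (-1) := by ring
      have hp2 : a ^ (2 * n + 2) = a ^ (2 * n) * a ^ 2 := by ring
      rw [hp1, hp2]
      field_simp [hfac]
      try ring
    have h6 := (hasSum_nat_add_iff (f := fun n : ℕ => ((2 * n)! : ℝ)⁻¹ • K ^ (2 * n)) 1).mp
      h4
    simpa [add_comm] using h6
  have htot : HasSum (fun n : ℕ => ((n)! : ℝ)⁻¹ • K ^ n)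
      ((1 + ((1 - Real.cos a) / a ^ 2) • K ^ 2) + (Real.sin a / a) • K) :=
    HasSum.even_add_odd heven hodd
  have hexp : rotOf r = ∑' n : ℕ, ((n)! : ℝ)⁻¹ • K ^ n := by
    rw [rotOf, NormedSpace.exp_eq_tsum (𝕂 := ℝ)]
  rw [hexp, htot.tsum_eq]
  abel

/-! ### Trace computations -/

lemma trace_cross_mul (r s : EuclideanSpace ℝ (Fin 3)) :
    (crossMat r * crossMat s).trace = -2 * (r 0 * s 0 + r 1 * s 1 + r 2 * s 2) := by
  simp [Matrix.trace, Matrix.mul_apply, Fin.sum_univ_three, crossMat]; ring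

lemma trace_cross_mul_sq (r s : EuclideanSpace ℝ (Fin 3)) :
    (crossMat r * crossMat s ^ 2).trace = 0 := by
  simp [Matrix.trace, Matrix.mul_apply, pow_succ, Fin.sum_univ_three, crossMat]; ring

lemma trace_sq_mul (r s : EuclideanSpace ℝ (Fin 3)) :
    (crossMat r ^ 2 * crossMat s).trace = 0 := by
  simp [Matrix.trace, Matrix.mul_apply, pow_succ, Fin.sum_univ_three, crossMat]; ring

lemma trace_sq_mul_sq (r s : EuclideanSpace ℝ (Fin 3)) :
    (crossMat r ^ 2 * crossMat s ^ 2).trace =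
      (r 0 * s 0 + r 1 * s 1 + r 2 * s 2) ^ 2 +
        (r 0 ^ 2 + r 1 ^ 2 + r 2 ^ 2) * (s 0 ^ 2 + s 1 ^ 2 + s 2 ^ 2) := by
  simp [Matrix.trace, Matrix.mul_apply, pow_succ, Fin.sum_univ_three, crossMat]; ring

lemma trace_sq (r : EuclideanSpace ℝ (Fin 3)) :
    (crossMat r ^ 2).trace = -2 * (r 0 ^ 2 + r 1 ^ 2 + r 2 ^ 2) := by
  simp [Matrix.trace, Matrix.mul_apply, pow_succ, Fin.sum_univ_three, crossMat]; ring

lemma trace_cross (r : EuclideanSpace ℝ (Fin 3)) : (crossMat r).trace = 0 := by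
  simp [Matrix.trace, Fin.sum_univ_three, crossMat]

lemma trace_formula_aux (r s : EuclideanSpace ℝ (Fin 3)) (fa ga fb gb : ℝ) :
    ((1 + fa • crossMat r + ga • crossMat r ^ 2)ᵀ *
      (1 + fb • crossMat s + gb • crossMat s ^ 2)).trace =
      3 - 2 * gb * (s 0 ^ 2 + s 1 ^ 2 + s 2 ^ 2) - 2 * ga * (r 0 ^ 2 + r 1 ^ 2 + r 2 ^ 2)
        - 2 * fa * fb * (r 0 * s 0 + r 1 * s 1 + r 2 * s 2) * (-1)
        + ga * gb * ((r 0 * s 0 + r 1 * s 1 + r 2 * s 2) ^ 2 +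
            (r 0 ^ 2 + r 1 ^ 2 + r 2 ^ 2) * (s 0 ^ 2 + s 1 ^ 2 + s 2 ^ 2)) := by
  have ht2 : (crossMat r ^ 2)ᵀ = crossMat r ^ 2 := by
    rw [Matrix.transpose_pow, crossMat_transpose, neg_sq]
  rw [Matrix.transpose_add, Matrix.transpose_add, Matrix.transpose_smul, Matrix.transpose_smul,
    Matrix.transpose_one, crossMat_transpose, ht2]
  simp only [add_mul, mul_add, one_mul, mul_one, smul_mul_assoc, mul_smul_comm,
    Matrix.trace_add, Matrix.trace_smul, smul_neg, neg_mul, Matrix.trace_neg, smul_smul]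
  simp only [trace_cross_mul, trace_cross_mul_sq, trace_sq_mul, trace_sq_mul_sq, trace_sq,
    trace_cross]
  have h1 : (1 : Matrix (Fin 3) (Fin 3) ℝ).trace = 3 := by
    simp [Matrix.trace, Fin.sum_univ_three]
  rw [h1]
  simp only [smul_eq_mul, smul_zero, mul_zero, neg_zero, add_zero, zero_add]
  ring

/-! ### Analytic lemmas -/

lemma arccos_antitone {x y : ℝ} (h : x ≤ y) : arccos y ≤ arccos x := by
  unfold Real.arccos
  have := Real.monotone_arcsin h
  linarith

lemma arccos_cos_le {A : ℝ} (hA : 0 ≤ A) : arccos (cos A) ≤ A := by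
  by_cases h : A ≤ π
  · rw [Real.arccos_cos hA h]
  · exact le_trans (Real.arccos_le_pi _) (le_of_not_ge h)

lemma abs_q_le_one (A B t : ℝ) (ht1 : -1 ≤ t) (ht2 : t ≤ 1) :
    |cos A * cos B + sin A * sin B * t| ≤ 1 := by
  have e : cos A * cos B + sin A * sin B * t
      = ((1+t)/2) * cos (A - B) + ((1-t)/2) * cos (A + B) := by
    rw [Real.cos_sub, Real.cos_add]; ring
  rw [abs_le, e]
  constructor <;>
    nlinarith [Real.cos_le_one (A-B), Real.neg_one_le_cos (A-B),
      Real.cos_le_one (A+B), Real.neg_one_le_cos (A+B)]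

lemma sin_div_antitone {x y : ℝ} (hx : 0 < x) (hxy : x ≤ y) (hy : y ≤ π) :
    sin y / y ≤ sin x / x := by
  have hy0 : 0 < y := lt_of_lt_of_le hx hxy
  have hcon := strictConcaveOn_sin_Icc.concaveOn
  have hmem1 : y ∈ Set.Icc (0:ℝ) π := ⟨hy0.le, hy⟩
  have hmem2 : (0:ℝ) ∈ Set.Icc (0:ℝ) π := ⟨le_refl _, Real.pi_pos.le⟩
  have hb0 : (0:ℝ) ≤ 1 - x/y := by
    rw [sub_nonneg]; exact div_le_one_of_le₀ hxy hy0.le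
  have h2 := hcon.2 hmem1 hmem2 (div_nonneg hx.le hy0.le) hb0 (by ring)
  simp only [smul_eq_mul, mul_zero, add_zero, Real.sin_zero] at h2
  have hxx : x/y * y = x := div_mul_cancel₀ x hy0.ne'
  rw [hxx] at h2
  rw [div_le_div_iff₀ hy0 hx]
  have h4 := mul_le_mul_of_nonneg_right h2 hy0.le
  have h3 : x / y * sin y * y = sin y * x := by field_simp
  linarith

lemma convexOn_cos_sqrt : ConvexOn ℝ (Set.Icc 0 (π^2)) (fun u => cos (Real.sqrt u)) := by
  have hder : ∀ u ∈ Set.Ioo (0:ℝ) (π^2),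
      HasDerivAt (fun u => cos (Real.sqrt u)) (-sin (Real.sqrt u) * (1/(2*Real.sqrt u))) u := by
    intro u hu
    exact (Real.hasDerivAt_sqrt hu.1.ne').cos
  have hint : interior (Set.Icc (0:ℝ) (π^2)) = Set.Ioo (0:ℝ) (π^2) := interior_Icc
  refine MonotoneOn.convexOn_of_deriv (convex_Icc _ _) ?_ ?_ ?_
  · exact (Real.continuous_cos.comp Real.continuous_sqrt).continuousOn
  · rw [hint]
    intro u hu
    exact ((hder u hu).differentiableAt).differentiableWithinAt
  · rw [hint]
    intro u hu v hv huv
    rw [(hder u hu).deriv, (hder v hv).deriv]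
    have hsu : 0 < Real.sqrt u := Real.sqrt_pos.mpr hu.1
    have hsv : 0 < Real.sqrt v := Real.sqrt_pos.mpr hv.1
    have hsuv : Real.sqrt u ≤ Real.sqrt v := Real.sqrt_le_sqrt huv
    have hvpi : Real.sqrt v ≤ π := by
      have : Real.sqrt v ≤ Real.sqrt (π^2) := Real.sqrt_le_sqrt hv.2.le
      rwa [Real.sqrt_sq Real.pi_pos.le] at this
    have h := sin_div_antitone hsu hsuv hvpi
    have e1 : -sin (Real.sqrt u) * (1/(2*Real.sqrt u)) = -(sin (Real.sqrt u)/Real.sqrt u)/2 := by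
      ring
    have e2 : -sin (Real.sqrt v) * (1/(2*Real.sqrt v)) = -(sin (Real.sqrt v)/Real.sqrt v)/2 := by
      ring
    rw [e1, e2]
    linarith

lemma affine_concaveOn (c0 c1 : ℝ) (s : Set ℝ) (hs : Convex ℝ s) :
    ConcaveOn ℝ s (fun u => c0 + c1 * u) := by
  refine ⟨hs, fun x _ y _ a b _ _ hab => le_of_eq ?_⟩
  simp only [smul_eq_mul]
  linear_combination c0 * hab

lemma keyLemma (A B t : ℝ) (hA : 0 ≤ A) (hB : 0 ≤ B) (ht1 : -1 ≤ t) (ht2 : t ≤ 1) :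
    arccos (cos A * cos B + sin A * sin B * t) ≤ Real.sqrt (A^2 + B^2 - 2*A*B*t) := by
  set u₀ := A^2 + B^2 - 2*A*B*t with hu₀
  have hABnn : 0 ≤ A*B := mul_nonneg hA hB
  have hABt : 0 ≤ A*B*(1-t) := mul_nonneg hABnn (by linarith)
  have hABt' : 0 ≤ A*B*(1+t) := mul_nonneg hABnn (by linarith)
  have hu0nn : 0 ≤ u₀ := by nlinarith [sq_nonneg (A-B)]
  by_cases hpi : π ≤ Real.sqrt u₀
  · exact le_trans (Real.arccos_le_pi _) hpi
  push_neg at hpi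
  have hu0pi : u₀ < π^2 := by
    have := Real.sq_sqrt hu0nn
    nlinarith [Real.sqrt_nonneg u₀]
  by_cases hA0 : A = 0
  · subst hA0
    simp only [Real.cos_zero, Real.sin_zero, one_mul, zero_mul, add_zero, zero_add]
    have e : Real.sqrt u₀ = Real.sqrt (B^2) := by rw [hu₀]; congr 1; ring
    rw [e, Real.sqrt_sq hB]
    exact arccos_cos_le hB
  by_cases hB0 : B = 0
  · subst hB0
    simp only [Real.cos_zero, Real.sin_zero, mul_one, mul_zero, zero_mul, add_zero]
    have e : Real.sqrt u₀ = Real.sqrt (A^2) := by rw [hu₀]; congr 1; ring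
    rw [e, Real.sqrt_sq hA]
    exact arccos_cos_le hA
  have hA' : 0 < A := lt_of_le_of_ne hA (Ne.symm hA0)
  have hB' : 0 < B := lt_of_le_of_ne hB (Ne.symm hB0)
  have hAB : 0 < A*B := mul_pos hA' hB'
  set L : ℝ → ℝ := fun u =>
    (cos A * cos B + sin A * sin B * ((A^2+B^2)/(2*A*B)))
      + (-(sin A * sin B / (2*A*B))) * u with hL
  have hLval : ∀ u, L u = cos A * cos B + sin A * sin B * ((A^2+B^2-u)/(2*A*B)) := by
    intro u; rw [hL]; field_simp; ring
  set h : ℝ → ℝ := fun u => L u - cos (Real.sqrt u) with hh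
  have hcon : ConcaveOn ℝ (Set.Icc 0 (π^2)) h := by
    exact (affine_concaveOn _ _ _ (convex_Icc _ _)).add convexOn_cos_sqrt.neg
  set uL : ℝ := (A-B)^2 with huL
  set uR : ℝ := min ((A+B)^2) (π^2) with huR
  have huLu0 : uL ≤ u₀ := by nlinarith
  have hu0uR : u₀ ≤ uR := by
    rw [huR, le_min_iff]; constructor <;> nlinarith
  have huLmem : uL ∈ Set.Icc (0:ℝ) (π^2) := ⟨sq_nonneg _, by nlinarith⟩
  have huRmem : uR ∈ Set.Icc (0:ℝ) (π^2) := ⟨le_min (sq_nonneg _) (sq_nonneg _), min_le_right _ _⟩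
  have hu0mem : u₀ ∈ Set.Icc uL uR := ⟨huLu0, hu0uR⟩
  have hhuL : h uL = 0 := by
    rw [hh]
    simp only
    rw [hLval, huL, Real.sqrt_sq_eq_abs, Real.cos_abs, Real.cos_sub]
    have e : (A^2+B^2-(A-B)^2)/(2*A*B) = 1 := by field_simp; ring
    rw [e]
    ring
  have hhuR : 0 ≤ h uR := by
    rw [huR]
    rcases le_total ((A+B)^2) (π^2) with hc | hc
    · rw [min_eq_left hc, hh]
      simp only
      rw [hLval, Real.sqrt_sq_eq_abs, abs_of_nonneg (by positivity : (0:ℝ) ≤ A+B), Real.cos_add]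
      have e : (A^2+B^2-(A+B)^2)/(2*A*B) = -1 := by field_simp; ring
      rw [e]
      ring_nf
      nlinarith [sq_nonneg (sin A * sin B)]
    · rw [min_eq_right hc, hh]
      simp only
      rw [hLval, Real.sqrt_sq Real.pi_pos.le, Real.cos_pi]
      set s : ℝ := (A^2+B^2-π^2)/(2*A*B) with hs
      have hs1 : s ≤ 1 := by
        rw [hs, div_le_one (by positivity)]; nlinarith
      have hs2 : -1 ≤ s := by
        rw [hs, le_div_iff₀ (by positivity)]; nlinarith
      have := abs_q_le_one A B s hs2 hs1
      rw [abs_le] at this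
      linarith [this.1]
  have hseg : u₀ ∈ segment ℝ uL uR := by
    rw [segment_eq_Icc (le_trans huLu0 hu0uR)]
    exact hu0mem
  have hmin := hcon.ge_on_segment huLmem huRmem hseg
  have hh0 : 0 ≤ h u₀ := le_trans (le_min (le_of_eq hhuL.symm) hhuR) hmin
  have hcosle : cos (Real.sqrt u₀) ≤ cos A * cos B + sin A * sin B * t := by
    have := hh0
    rw [hh] at this
    simp only at this
    rw [hLval] at this
    have e : (A^2+B^2-u₀)/(2*A*B) = t := by rw [hu₀]; field_simp; try ring
    rw [e] at this
    linarith
  calc arccos (cos A * cos B + sin A * sin B * t) ≤ arccos (cos (Real.sqrt u₀)) :=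
        arccos_antitone hcosle
    _ = Real.sqrt u₀ := Real.arccos_cos (Real.sqrt_nonneg _) hpi.le

lemma scalar_main (a b t : ℝ) (ha : 0 ≤ a) (hb : 0 ≤ b) (ht1 : -1 ≤ t) (ht2 : t ≤ 1) :
    arccos (2 * (cos (a/2) * cos (b/2) + sin (a/2) * sin (b/2) * t)^2 - 1)
      ≤ Real.sqrt (a^2 + b^2 - 2*(a*b*t)) := by
  set q : ℝ := cos (a/2) * cos (b/2) + sin (a/2) * sin (b/2) * t with hq
  have hq1 : |q| ≤ 1 := abs_q_le_one _ _ _ ht1 ht2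
  have harc : arccos (2*q^2 - 1) = 2 * arccos |q| := by
    have hc : cos (2 * arccos |q|) = 2*q^2 - 1 := by
      rw [Real.cos_two_mul, Real.cos_arccos (by linarith [abs_nonneg q]) hq1, sq_abs]
    rw [← hc]
    rw [Real.arccos_cos (by linarith [Real.arccos_nonneg |q|]) ?_]
    have : arccos |q| ≤ π/2 := Real.arccos_le_pi_div_two.mpr (abs_nonneg q)
    linarith
  rw [harc]
  have h1 : arccos |q| ≤ arccos q := arccos_antitone (le_abs_self q)
  have h2 := keyLemma (a/2) (b/2) t (by positivity) (by positivity) ht1 ht2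
  rw [← hq] at h2
  have h3 : Real.sqrt (a^2 + b^2 - 2*(a*b*t))
      = 2 * Real.sqrt ((a/2)^2 + (b/2)^2 - 2*(a/2)*(b/2)*t) := by
    rw [show a^2 + b^2 - 2*(a*b*t) = 2^2 * ((a/2)^2 + (b/2)^2 - 2*(a/2)*(b/2)*t) from by ring]
    rw [Real.sqrt_mul (by norm_num) _, Real.sqrt_sq (by norm_num : (0:ℝ) ≤ 2)]
  rw [h3]
  linarith

lemma half_sq_key (sa ca sb cb t : ℝ) (hpa : sa^2 + ca^2 = 1) (hpb : sb^2 + cb^2 = 1) :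
    (3 - 2*(2*sb^2) - 2*(2*sa^2) + 2*(2*sa*ca)*(2*sb*cb)*t + (2*sa^2)*(2*sb^2)*(t^2+1) - 1)/2
      = 2*(ca*cb + sa*sb*t)^2 - 1 := by
  linear_combination (-2*cb^2) * hpa + (-2*(1-sa^2)) * hpb

lemma E_eq (a b p : ℝ) (ha : a ≠ 0) (hb : b ≠ 0) :
    (3 - 2*((1-Real.cos b)/b^2)*(b^2) - 2*((1-Real.cos a)/a^2)*(a^2)
      - 2*(Real.sin a/a)*(Real.sin b/b)*p*(-1)
      + ((1-Real.cos a)/a^2)*((1-Real.cos b)/b^2)*(p^2 + a^2*b^2) - 1)/2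
    = 2*(Real.cos (a/2)*Real.cos (b/2) + Real.sin (a/2)*Real.sin (b/2)*(p/(a*b)))^2 - 1 := by
  have hca : Real.cos a = 1 - 2*Real.sin (a/2)^2 := by
    have h := Real.sin_sq_eq_half_sub (a/2)
    rw [show 2*(a/2) = a from by ring] at h; linarith
  have hcb : Real.cos b = 1 - 2*Real.sin (b/2)^2 := by
    have h := Real.sin_sq_eq_half_sub (b/2)
    rw [show 2*(b/2) = b from by ring] at h; linarith
  have hsa : Real.sin a = 2*Real.sin (a/2)*Real.cos (a/2) := by
    rw [← Real.sin_two_mul]; congr 1; ring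
  have hsb : Real.sin b = 2*Real.sin (b/2)*Real.cos (b/2) := by
    rw [← Real.sin_two_mul]; congr 1; ring
  have h1 : 2*((1-Real.cos b)/b^2)*(b^2) = 2*(2*Real.sin (b/2)^2) := by
    rw [hcb]; field_simp; try ring
  have h2 : 2*((1-Real.cos a)/a^2)*(a^2) = 2*(2*Real.sin (a/2)^2) := by
    rw [hca]; field_simp; try ring
  have h3 : -(2*(Real.sin a/a)*(Real.sin b/b)*p*(-1))
      = 2*(2*Real.sin (a/2)*Real.cos (a/2))*(2*Real.sin (b/2)*Real.cos (b/2))*(p/(a*b)) := by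
    rw [hsa, hsb]; field_simp; try ring
  have h4 : ((1-Real.cos a)/a^2)*((1-Real.cos b)/b^2)*(p^2 + a^2*b^2)
      = (2*Real.sin (a/2)^2)*(2*Real.sin (b/2)^2)*((p/(a*b))^2+1) := by
    rw [hca, hcb]; field_simp; try ring
  have key := half_sq_key (Real.sin (a/2)) (Real.cos (a/2)) (Real.sin (b/2)) (Real.cos (b/2))
    (p/(a*b)) (Real.sin_sq_add_cos_sq _) (Real.sin_sq_add_cos_sq _)
  rw [← key]
  have e : 3 - 2*((1-Real.cos b)/b^2)*(b^2) - 2*((1-Real.cos a)/a^2)*(a^2)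
      - 2*(Real.sin a/a)*(Real.sin b/b)*p*(-1)
      + ((1-Real.cos a)/a^2)*((1-Real.cos b)/b^2)*(p^2 + a^2*b^2)
    = 3 - 2*(2*Real.sin (b/2)^2) - 2*(2*Real.sin (a/2)^2)
      + 2*(2*Real.sin (a/2)*Real.cos (a/2))*(2*Real.sin (b/2)*Real.cos (b/2))*(p/(a*b))
      + (2*Real.sin (a/2)^2)*(2*Real.sin (b/2)^2)*((p/(a*b))^2+1) := by
    rw [h1, h2, ← h3, h4]; ring
  rw [e]

/-! ### Main theorem -/

lemma crossMat_zero : crossMat (0 : EuclideanSpace ℝ (Fin 3)) = 0 := by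
  ext i j; fin_cases i <;> fin_cases j <;>
    simp [crossMat, Matrix.vecHead, Matrix.vecTail]

lemma rotOf_zero : rotOf (0 : EuclideanSpace ℝ (Fin 3)) = 1 := by
  rw [rotOf, crossMat_zero, NormedSpace.exp_zero]

lemma trace_rot (r : EuclideanSpace ℝ (Fin 3)) (hr : r ≠ 0) :
    (rotOf r).trace = 3 - 2 * ((1 - Real.cos ‖r‖) / ‖r‖^2) * ‖r‖^2 := by
  have ha : ‖r‖ ≠ 0 := norm_ne_zero_iff.mpr hr
  rw [rodrigues r ha]
  rw [Matrix.trace_add, Matrix.trace_add, Matrix.trace_smul, Matrix.trace_smul,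
    trace_cross, trace_sq, ← norm_sq_eq]
  have h1 : (1 : Matrix (Fin 3) (Fin 3) ℝ).trace = 3 := by
    simp [Matrix.trace, Fin.sum_univ_three]
  rw [h1]
  simp only [smul_eq_mul]
  ring

theorem angular_distance_le_angle_axis_distance (r r₀ : EuclideanSpace ℝ (Fin 3)) :
    Real.arccos ((((rotOf r)ᵀ * rotOf r₀).trace - 1) / 2) ≤ ‖r - r₀‖ := by
  by_cases hr : r = 0
  · subst hr
    rw [rotOf_zero, Matrix.transpose_one, one_mul]
    by_cases hr0 : r₀ = 0
    · subst hr0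
      rw [rotOf_zero]
      have h1 : (1 : Matrix (Fin 3) (Fin 3) ℝ).trace = 3 := by
        simp [Matrix.trace, Fin.sum_univ_three]
      rw [h1]
      norm_num [Real.arccos_one]
    · have hb : ‖r₀‖ ≠ 0 := norm_ne_zero_iff.mpr hr0
      rw [trace_rot r₀ hr0]
      have e : (3 - 2 * ((1 - Real.cos ‖r₀‖) / ‖r₀‖^2) * ‖r₀‖^2 - 1) / 2 = Real.cos ‖r₀‖ := by
        rw [mul_assoc, div_mul_cancel₀ _ (pow_ne_zero 2 hb)]
        ring
      rw [e, zero_sub, norm_neg]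
      exact arccos_cos_le (norm_nonneg _)
  by_cases hr0 : r₀ = 0
  · subst hr0
    rw [rotOf_zero, mul_one, Matrix.trace_transpose]
    rw [trace_rot r hr]
    have ha : ‖r‖ ≠ 0 := norm_ne_zero_iff.mpr hr
    have e : (3 - 2 * ((1 - Real.cos ‖r‖) / ‖r‖^2) * ‖r‖^2 - 1) / 2 = Real.cos ‖r‖ := by
      rw [mul_assoc, div_mul_cancel₀ _ (pow_ne_zero 2 ha)]
      ring
    rw [e, sub_zero]
    exact arccos_cos_le (norm_nonneg _)
  -- main case
  have ha : ‖r‖ ≠ 0 := norm_ne_zero_iff.mpr hr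
  have hb : ‖r₀‖ ≠ 0 := norm_ne_zero_iff.mpr hr0
  have ha' : 0 < ‖r‖ := norm_pos_iff.mpr hr
  have hb' : 0 < ‖r₀‖ := norm_pos_iff.mpr hr0
  set a := ‖r‖ with haa
  set b := ‖r₀‖ with hbb
  set p : ℝ := inner ℝ r r₀ with hp
  rw [rodrigues r ha, rodrigues r₀ hb, trace_formula_aux]
  rw [show r 0 ^ 2 + r 1 ^ 2 + r 2 ^ 2 = a^2 from (norm_sq_eq r).symm,
    show r₀ 0 ^ 2 + r₀ 1 ^ 2 + r₀ 2 ^ 2 = b^2 from (norm_sq_eq r₀).symm,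
    show r 0 * r₀ 0 + r 1 * r₀ 1 + r 2 * r₀ 2 = p from (inner_eq_coords r r₀).symm]
  rw [E_eq a b p ha hb]
  have hpab : |p| ≤ a * b := abs_real_inner_le_norm r r₀
  have habpos : 0 < a * b := mul_pos ha' hb'
  have ht1 : -1 ≤ p / (a*b) := by
    rw [le_div_iff₀ habpos]
    have := abs_le.mp hpab
    linarith [this.1]
  have ht2 : p / (a*b) ≤ 1 := by
    rw [div_le_one habpos]
    exact le_trans (le_abs_self p) hpab
  have hnorm : ‖r - r₀‖ = Real.sqrt (a^2 + b^2 - 2*(a*b*(p/(a*b)))) := by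
    have h1 : a*b*(p/(a*b)) = p := by field_simp
    rw [h1]
    have h2 : ‖r - r₀‖^2 = a^2 + b^2 - 2*p := by
      rw [norm_sub_sq_real]
      simp only [← haa, ← hbb, ← hp]
      ring
    rw [← h2, Real.sqrt_sq (norm_nonneg _)]
  rw [hnorm]
  exact scalar_main a b (p/(a*b)) ha'.le hb'.le ht1 ht2
end

section
/- (Bounds of the trimmed L₂ error) Let Y be a nonempty finite set of points in ℝ³, let x₁, …, x_N ∈ ℝ³ be data points, let r₀, t₀ ∈ ℝ³, let σ_r, σ_t ≥ 0, and let 1 ≤ K ≤ N. For r, t ∈ ℝ³ define e_i(r, t) = min_{y ∈ Y} ‖exp([r]ₓ) x_i + t − y‖, and define the trimmed error E^{Tr}(r, t) as the minimum over all size-K subsets S of {1, …, N} of Σ_{i ∈ S} e_i(r, t)² (the sum of the K smallest squared residuals). Define γ_{r,i} = 2 sin(min(√3 σ_r / 2, π/2)) ‖x_i‖, γ_t = √3 σ_t, and the per-point lower bounds ℓ_i = max(e_i(r₀, t₀) − (γ_{r,i} + γ_t), 0). Then for every r in the cube of half side-length σ_r centered at r₀ and every t in the cube of half side-length σ_t centered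 at t₀: min over size-K subsets Q of {1, …, N} of Σ_{i ∈ Q} ℓ_i² ≤ E^{Tr}(r, t). -/
open Matrix Real

namespace TrimAux

abbrev E3 := EuclideanSpace ℝ (Fin 3)

lemma mApp_apply (A : Matrix (Fin 3) (Fin 3) ℝ) (x : E3) (i : Fin 3) :
    mApp A x i = A i 0 * x 0 + A i 1 * x 1 + A i 2 * x 2 := by
  simp [mApp, Matrix.toEuclideanLin_apply, Matrix.mulVec, dotProduct, Fin.sum_univ_three]

lemma mApp_one (x : E3) : mApp 1 x = x := by
  ext i
  fin_cases i <;> simp [mApp_apply, Matrix.one_apply]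

lemma mApp_add (A B : Matrix (Fin 3) (Fin 3) ℝ) (x : E3) :
    mApp (A + B) x = mApp A x + mApp B x := by
  simp [mApp]

lemma mApp_smul (c : ℝ) (A : Matrix (Fin 3) (Fin 3) ℝ) (x : E3) :
    mApp (c • A) x = c • mApp A x := by
  simp [mApp]

lemma mApp_mul (A B : Matrix (Fin 3) (Fin 3) ℝ) (x : E3) :
    mApp (A * B) x = mApp A (mApp B x) := by
  ext i
  fin_cases i <;>
    simp [mApp_apply, Matrix.mul_apply, Fin.sum_univ_three] <;> ring

lemma normsq (v : E3) : ‖v‖ ^ 2 = v 0 ^ 2 + v 1 ^ 2 + v 2 ^ 2 := by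
  rw [EuclideanSpace.norm_eq, Real.sq_sqrt (by positivity)]
  simp [Fin.sum_univ_three, sq_abs]

lemma inner3 (v w : E3) : (inner ℝ v w : ℝ) = v 0 * w 0 + v 1 * w 1 + v 2 * w 2 := by
  simp [PiLp.inner_apply, Fin.sum_univ_three]; ring

lemma crossMat_smul (c : ℝ) (v : E3) : crossMat (c • v) = c • crossMat v := by
  ext i j
  fin_cases i <;> fin_cases j <;> simp [crossMat] <;> ring

lemma crossMat_cube' (p : E3) :
    crossMat p ^ 3 = -((p 0 ^ 2 + p 1 ^ 2 + p 2 ^ 2) • crossMat p) := by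
  ext i j
  fin_cases i <;> fin_cases j <;>
    simp [pow_succ, crossMat, Matrix.mul_apply, Fin.sum_univ_three] <;> ring

lemma rodrigues (P : Matrix (Fin 3) (Fin 3) ℝ) (hP : P ^ 3 = -P) (θ : ℝ) :
    NormedSpace.exp (θ • P) = 1 + Real.sin θ • P + (1 - Real.cos θ) • P ^ 2 := by
  letI : SeminormedRing (Matrix (Fin 3) (Fin 3) ℝ) := Matrix.linftyOpSemiNormedRing
  letI : NormedRing (Matrix (Fin 3) (Fin 3) ℝ) := Matrix.linftyOpNormedRing
  letI : NormedAlgebra ℝ (Matrix (Fin 3) (Fin 3) ℝ) := Matrix.linftyOpNormedAlgebra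
  set G : ℝ → Matrix (Fin 3) (Fin 3) ℝ :=
    fun t => 1 + Real.sin t • P + (1 - Real.cos t) • P ^ 2 with hG
  have hPG : ∀ t : ℝ, P * G t = Real.cos t • P + Real.sin t • P ^ 2 := by
    intro t
    have h3 : P * P ^ 2 = -P := by
      rw [← pow_succ']; exact hP
    simp only [hG, mul_add, mul_one, mul_smul_comm, h3]
    rw [show P * P = P ^ 2 from (sq P).symm]
    module
  have hf : ∀ s : ℝ,
      HasDerivAt (fun t : ℝ => NormedSpace.exp (t • (-P)) * G t) 0 s := by
    intro s
    have h1 : HasDerivAt (fun t : ℝ => NormedSpace.exp (t • (-P)))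
        (NormedSpace.exp (s • (-P)) * (-P)) s := hasDerivAt_exp_smul_const (-P) s
    have hs := (Real.hasDerivAt_sin s).smul_const P
    have hc : HasDerivAt (fun t : ℝ => (1 - Real.cos t)) (Real.sin s) s := by
      exact ((hasDerivAt_const s (1 : ℝ)).sub (Real.hasDerivAt_cos s)).congr_deriv (by simp)
    have h2 : HasDerivAt G (Real.cos s • P + Real.sin s • P ^ 2) s := by
      exact (((hasDerivAt_const s (1 : Matrix (Fin 3) (Fin 3) ℝ)).add hs).add
        (hc.smul_const (P ^ 2))).congr_deriv (by simp)
    have h := h1.mul h2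
    have e0 : NormedSpace.exp (s • -P) * -P * G s +
        NormedSpace.exp (s • -P) * (Real.cos s • P + Real.sin s • P ^ 2) = 0 := by
      rw [mul_assoc, ← mul_add, neg_mul, hPG s, neg_add_cancel, mul_zero]
    rwa [e0] at h
  have hconst : ∀ t : ℝ, NormedSpace.exp (t • (-P)) * G t = 1 := by
    intro t
    have hd : ∀ s : ℝ, ((fun t : ℝ => NormedSpace.exp (t • (-P)) * G t)) s =
        ((fun t : ℝ => NormedSpace.exp (t • (-P)) * G t)) 0 := by
      intro s
      exact is_const_of_deriv_eq_zero (fun y => (hf y).differentiableAt)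
        (fun y => (hf y).deriv) s 0
    have := hd t
    simpa [hG] using this
  have h4 : NormedSpace.exp (θ • P) * NormedSpace.exp (θ • (-P)) = 1 := by
    have hcm : Commute (θ • P) (θ • (-P)) :=
      ((Commute.refl P).neg_right.smul_left θ).smul_right θ
    rw [← Matrix.exp_add_of_commute _ _ hcm]
    simp
  symm
  calc G θ = 1 * G θ := (one_mul _).symm
    _ = NormedSpace.exp (θ • P) * NormedSpace.exp (θ • (-P)) * G θ := by rw [h4]
    _ = NormedSpace.exp (θ • P) * (NormedSpace.exp (θ • (-P)) * G θ) := by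
        rw [mul_assoc]
    _ = NormedSpace.exp (θ • P) := by rw [hconst θ, mul_one]

end TrimAux

namespace TrimAux

set_option maxRecDepth 10000 in
private lemma scalar_key (p0 p1 p2 q0 q1 q2 x0 x1 x2 sa ca sb cb : ℝ)
    (h1 : sa^2 + ca^2 = 1) (h2 : sb^2 + cb^2 = 1)
    (h3 : p0^2 + p1^2 + p2^2 = 1) (h4 : q0^2 + q1^2 + q2^2 = 1) :
    (x0 + 2*sa*ca*(p1*x2 - p2*x1) + 2*sa^2*(p1*(p0*x1 - p1*x0) - p2*(p2*x0 - p0*x2)))*(x0 + 2*sb*cb*(q1*x2 - q2*x1) + 2*sb^2*(q1*(q0*x1 - q1*x0) - q2*(q2*x0 - q0*x2))) + (x1 + 2*sa*ca*(p2*x0 - p0*x2) + 2*sa^2*(p2*(p1*x2 - p2*x1) - p0*(p0*x1 - p1*x0)))*(x1 + 2*sb*cb*(q2*x0 - q0*x2) + 2*sb^2*(q2*(q1*x2 - q2*x1) - q0*(q0*x1 - q1*x0))) + (x2 + 2*sa*ca*(p0*x1 - p1*x0) + 2*sa^2*(p0*(p2*x0 - p0*x2) - p1*(p1*x2 - p2*x1)))*(x2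 + 2*sb*cb*(q0*x1 - q1*x0) + 2*sb^2*(q0*(q2*x0 - q0*x2) - q1*(q1*x2 - q2*x1))) =
      (2*(ca*cb + sa*sb*(p0*q0+p1*q1+p2*q2))^2 - 1)*(x0^2+x1^2+x2^2)
        + 2*(ca*sb*(q0*x0+q1*x1+q2*x2) - sa*cb*(p0*x0+p1*x1+p2*x2) - sa*sb*((p1*q2-p2*q1)*x0 + (p2*q0-p0*q2)*x1 + (p0*q1-p1*q0)*x2))^2 := by
  linear_combination ((- 2) * x2^2 * cb^2  + (- 2) * x1^2 * cb^2  + (- 2) * x0^2 * cb^2  + (- 2) * q2^2 * x2^2 * sb^2  + (- 4) * q1 * q2 * x1 * x2 * sb^2  + (- 2) * q1^2 * x1^2 * sb^2  + (- 4) * q0 * q2 * x0 * x2 * sb^2  + (- 4) * q0 * q1 * x0 * x1 * sb^2  + (- 2) * q0^2 * x0^2 * sb^2) * h1 + ((- 2) * x2^2  + 2 * x2^2 * sa^2  + (- 2) * x1^2  + 2 * x1^2 * sa^2  + (- 2) * x0^2  + 2 * x0^2 * sa^2  + (- 2) * p2^2 * x2^2 * sa^2  + (- 4) * p1 * p2 *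 x1 * x2 * sa^2  + (- 2) * p1^2 * x1^2 * sa^2  + (- 4) * p0 * p2 * x0 * x2 * sa^2  + (- 4) * p0 * p1 * x0 * x1 * sa^2  + (- 2) * p0^2 * x0^2 * sa^2) * h2 + ((- 2) * x2^2 * sa^2  + (- 2) * x1^2 * sa^2  + (- 2) * x0^2 * sa^2  + 2 * x0^2 * sa^2 * sb^2  + 2 * q2^2 * x1^2 * sa^2 * sb^2  + (- 4) * q1 * q2 * x1 * x2 * sa^2 * sb^2  + 2 * q1^2 * x2^2 * sa^2 * sb^2  + (- 4) * q0 * q2 * x0 * x2 * sa^2 * sb^2  + (- 4) * q0 * q1 * x0 * x1 * sa^2 * sb^2  + 2 * q0^2 * x2^2 * sa^2 * sb^2  + 2 * q0^2 * x1^2 * sa^2 * sb^2  + (- 2) * q0^2 * x0^2 * sa^2 * sb^2) * h3 + ((- 2) * x2^2 * sb^2  + 2 * x2^2 * sa^2 * sb^2  + (- 2) * x1^2 * sb^2  + 2 * x1^2 * sa^2 * sb^2  + (- 2) * x0^2 * sb^2  + (- 2) * p2^2 * x2^2 * sa^2 * sb^2  + 2 * p2^2 * x0^2 * sa^2 * sb^2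  + (- 4) * p1 * p2 * x1 * x2 * sa^2 * sb^2  + (- 2) * p1^2 * x1^2 * sa^2 * sb^2  + 2 * p1^2 * x0^2 * sa^2 * sb^2  + (- 4) * p0 * p2 * x0 * x2 * sa^2 * sb^2  + (- 4) * p0 * p1 * x0 * x1 * sa^2 * sb^2) * h4


open scoped Classical in
noncomputable def axisOf (a : E3) : E3 :=
  if a = 0 then EuclideanSpace.single 0 1 else ‖a‖⁻¹ • a

lemma axis_norm (a : E3) : ‖axisOf a‖ = 1 := by
  rw [axisOf]
  split_ifs with h
  · simp [EuclideanSpace.norm_single]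
  · rw [norm_smul, norm_inv, norm_norm, inv_mul_cancel₀ (norm_ne_zero_iff.mpr h)]

lemma axis_spec (a : E3) : a = ‖a‖ • axisOf a := by
  rw [axisOf]
  split_ifs with h
  · simp [h]
  · rw [smul_smul, mul_inv_cancel₀ (norm_ne_zero_iff.mpr h), one_smul]

lemma axis_coord_sq (a : E3) :
    axisOf a 0 ^ 2 + axisOf a 1 ^ 2 + axisOf a 2 ^ 2 = 1 := by
  rw [← normsq, axis_norm]; norm_num

lemma axis_inner (a b : E3) :
    (inner ℝ a b : ℝ) = ‖a‖ * ‖b‖ * (inner ℝ (axisOf a) (axisOf b) : ℝ) := by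
  conv_lhs => rw [axis_spec a, axis_spec b]
  rw [real_inner_smul_left, real_inner_smul_right]
  ring

noncomputable def RotM (θ : ℝ) (p : E3) : Matrix (Fin 3) (Fin 3) ℝ :=
  1 + Real.sin θ • crossMat p + (1 - Real.cos θ) • crossMat p ^ 2

lemma rotOf_eq (a : E3) : rotOf a = RotM ‖a‖ (axisOf a) := by
  have hcube : crossMat (axisOf a) ^ 3 = -crossMat (axisOf a) := by
    rw [crossMat_cube', axis_coord_sq, one_smul]
  have h1 : crossMat a = ‖a‖ • crossMat (axisOf a) := by
    conv_lhs => rw [axis_spec a]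
    exact crossMat_smul _ _
  rw [rotOf, h1, rodrigues _ hcube, RotM]

noncomputable def capp (p x : E3) : E3 := mApp (crossMat p) x

lemma capp0 (p x : E3) : capp p x 0 = p 1 * x 2 - p 2 * x 1 := by
  rw [capp, mApp_apply]; simp [crossMat]; ring

lemma capp1 (p x : E3) : capp p x 1 = p 2 * x 0 - p 0 * x 2 := by
  rw [capp, mApp_apply]; simp [crossMat]; ring

lemma capp2 (p x : E3) : capp p x 2 = p 0 * x 1 - p 1 * x 0 := by
  rw [capp, mApp_apply]; simp [crossMat]; ring

lemma mApp_RotM (θ : ℝ) (p x : E3) :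
    mApp (RotM θ p) x = x + Real.sin θ • capp p x
      + (1 - Real.cos θ) • capp p (capp p x) := by
  rw [RotM, mApp_add, mApp_add, mApp_one, mApp_smul, mApp_smul, sq, mApp_mul]
  rfl

set_option maxRecDepth 10000 in
lemma rot_inner_eq (a b xx : E3) :
    (inner ℝ (mApp (rotOf a) xx) (mApp (rotOf b) xx) : ℝ) =
      (2 * (Real.cos (‖a‖/2) * Real.cos (‖b‖/2)
          + Real.sin (‖a‖/2) * Real.sin (‖b‖/2) * (inner ℝ (axisOf a) (axisOf b) : ℝ)) ^ 2 - 1)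
        * ‖xx‖ ^ 2
      + 2 * (Real.cos (‖a‖/2) * Real.sin (‖b‖/2) * (inner ℝ (axisOf b) xx : ℝ)
          - Real.sin (‖a‖/2) * Real.cos (‖b‖/2) * (inner ℝ (axisOf a) xx : ℝ)
          - Real.sin (‖a‖/2) * Real.sin (‖b‖/2)
              * (inner ℝ (capp (axisOf a) (axisOf b)) xx : ℝ)) ^ 2 := by
  have h3a : 2 * (‖a‖/2) = ‖a‖ := by ring
  have h3b : 2 * (‖b‖/2) = ‖b‖ := by ring
  have ha2 : Real.sin ‖a‖ = 2 * Real.sin (‖a‖/2) * Real.cos (‖a‖/2) := by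
    conv_lhs => rw [← h3a, Real.sin_two_mul]
  have hb2 : Real.sin ‖b‖ = 2 * Real.sin (‖b‖/2) * Real.cos (‖b‖/2) := by
    conv_lhs => rw [← h3b, Real.sin_two_mul]
  have hca : 1 - Real.cos ‖a‖ = 2 * Real.sin (‖a‖/2) ^ 2 := by
    have h1 := Real.cos_two_mul (‖a‖/2)
    have h2 := Real.sin_sq_add_cos_sq (‖a‖/2)
    rw [h3a] at h1; linarith
  have hcb : 1 - Real.cos ‖b‖ = 2 * Real.sin (‖b‖/2) ^ 2 := by
    have h1 := Real.cos_two_mul (‖b‖/2)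
    have h2 := Real.sin_sq_add_cos_sq (‖b‖/2)
    rw [h3b] at h1; linarith
  rw [rotOf_eq a, rotOf_eq b, normsq, mApp_RotM, mApp_RotM, ha2, hb2, hca, hcb]
  simp only [inner3, PiLp.add_apply, PiLp.smul_apply, capp0, capp1, capp2, smul_eq_mul]
  linear_combination scalar_key (axisOf a 0) (axisOf a 1) (axisOf a 2)
    (axisOf b 0) (axisOf b 1) (axisOf b 2) (xx 0) (xx 1) (xx 2)
    (Real.sin (‖a‖/2)) (Real.cos (‖a‖/2)) (Real.sin (‖b‖/2)) (Real.cos (‖b‖/2))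
    (Real.sin_sq_add_cos_sq (‖a‖/2)) (Real.sin_sq_add_cos_sq (‖b‖/2))
    (axis_coord_sq a) (axis_coord_sq b)

lemma capp_self (p : E3) : capp p p = 0 := by
  ext i
  fin_cases i <;> simp [capp0, capp1, capp2] <;> ring

lemma rot_norm (a xx : E3) : ‖mApp (rotOf a) xx‖ = ‖xx‖ := by
  have h := rot_inner_eq a a xx
  rw [capp_self] at h
  have hpp : (inner ℝ (axisOf a) (axisOf a) : ℝ) = 1 := by
    rw [real_inner_self_eq_norm_sq, axis_norm]; norm_num
  rw [hpp] at h
  have hsq : ‖mApp (rotOf a) xx‖ ^ 2 = ‖xx‖ ^ 2 := by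
    rw [← real_inner_self_eq_norm_sq, h]
    simp only [inner_zero_left]
    linear_combination (2 * ((Real.sin (‖a‖/2))^2 + (Real.cos (‖a‖/2))^2 + 1) * ‖xx‖^2) *
      Real.sin_sq_add_cos_sq (‖a‖/2)
  have h1 := congrArg Real.sqrt hsq
  rwa [Real.sqrt_sq (norm_nonneg _), Real.sqrt_sq (norm_nonneg _)] at h1

end TrimAux
namespace TrimAux

lemma sin_ratio (y x : ℝ) (hy0 : 0 ≤ y) (hyx : y ≤ x) (hy : y ≤ π/2) :
    y * Real.sin x ≤ x * Real.sin y := by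
  have hπ := Real.pi_pos
  rcases le_or_gt x π with hxπ | hxπ
  · rcases eq_or_lt_of_le (hy0.trans hyx) with hx0 | hx0
    · have hyy : y = 0 := le_antisymm (hx0 ▸ hyx) hy0
      simp [hyy, ← hx0]
    · have hconc := strictConcaveOn_sin_Icc.concaveOn
      have h0m : (0:ℝ) ∈ Set.Icc (0:ℝ) π := ⟨le_rfl, hπ.le⟩
      have hxm : x ∈ Set.Icc (0:ℝ) π := ⟨hx0.le, hxπ⟩
      have ha : (0:ℝ) ≤ 1 - y/x := by
        have : y/x ≤ 1 := by rw [div_le_one hx0]; exact hyx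
        linarith
      have hb : (0:ℝ) ≤ y/x := by positivity
      have key := hconc.2 h0m hxm ha hb (by ring)
      simp only [smul_eq_mul, mul_zero, Real.sin_zero, zero_add] at key
      rw [div_mul_cancel₀ y hx0.ne'] at key
      have key2 : y/x * Real.sin x ≤ Real.sin y := by linarith [key]
      have h3 := mul_le_mul_of_nonneg_left key2 hx0.le
      calc y * Real.sin x = x * (y/x * Real.sin x) := by field_simp
        _ ≤ x * Real.sin y := h3
  · rcases le_or_gt (Real.sin x) 0 with hs | hs
    · have h1 : 0 ≤ y * (-Real.sin x) := mul_nonneg hy0 (by linarith)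
      have h2 : 0 ≤ x * Real.sin y :=
        mul_nonneg (by linarith) (Real.sin_nonneg_of_nonneg_of_le_pi hy0 (by linarith))
      nlinarith
    · have hjy : 2/π * y ≤ Real.sin y := Real.mul_le_sin hy0 hy
      have hsx : Real.sin x ≤ 1 := Real.sin_le_one x
      have t1 : y * Real.sin x ≤ y := by nlinarith
      have t2 : x * (2/π*y) ≤ x * Real.sin y := mul_le_mul_of_nonneg_left hjy (by linarith)
      have t3 : 2*y ≤ x * (2/π*y) := by
        have h4 : π * (2/π*y) ≤ x * (2/π*y) :=
          mul_le_mul_of_nonneg_right (by linarith) (by positivity)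
        have h5 : π * (2/π*y) = 2*y := by field_simp
        linarith
      linarith

lemma key_prod (p q A B : ℝ) (hp0 : 0 ≤ p) (hq0 : 0 ≤ q) (hpπ : p ≤ π/2) (hqπ : q ≤ π/2)
    (hpA : p ≤ A) (hqB : q ≤ B) :
    (p*q) * (Real.sin A * Real.sin B) ≤ (A*B) * (Real.sin p * Real.sin q) := by
  have hπ := Real.pi_pos
  have hA0 : 0 ≤ A := hp0.trans hpA
  have hB0 : 0 ≤ B := hq0.trans hqB
  have hsp : 0 ≤ Real.sin p := Real.sin_nonneg_of_nonneg_of_le_pi hp0 (by linarith)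
  have hsq : 0 ≤ Real.sin q := Real.sin_nonneg_of_nonneg_of_le_pi hq0 (by linarith)
  rcases le_or_gt (Real.sin A * Real.sin B) 0 with h | h
  · have l1 : (p*q) * (Real.sin A * Real.sin B) ≤ 0 := by
      nlinarith [mul_nonneg hp0 hq0]
    have l2 : 0 ≤ (A*B) * (Real.sin p * Real.sin q) :=
      mul_nonneg (mul_nonneg hA0 hB0) (mul_nonneg hsp hsq)
    linarith
  · rcases le_or_gt 0 (Real.sin A) with hsa | hsa
    · have hsb : 0 < Real.sin B := by nlinarith
      have h1 : p * Real.sin A ≤ A * Real.sin p := sin_ratio p A hp0 hpA hpπ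
      have h2 : q * Real.sin B ≤ B * Real.sin q := sin_ratio q B hq0 hqB hqπ
      have hprod : (p * Real.sin A) * (q * Real.sin B)
          ≤ (A * Real.sin p) * (B * Real.sin q) :=
        mul_le_mul h1 h2 (mul_nonneg hq0 hsb.le) (mul_nonneg hA0 hsp)
      calc (p*q) * (Real.sin A * Real.sin B) = (p * Real.sin A) * (q * Real.sin B) := by ring
        _ ≤ (A * Real.sin p) * (B * Real.sin q) := hprod
        _ = (A*B) * (Real.sin p * Real.sin q) := by ring
    · -- sin A < 0, hence sin B < 0 and A, B > π
      have hsb : Real.sin B < 0 := by nlinarith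
      have hAπ : π < A := by
        by_contra hcon
        push_neg at hcon
        exact absurd (Real.sin_nonneg_of_nonneg_of_le_pi hA0 hcon) (not_le.mpr hsa)
      have hBπ : π < B := by
        by_contra hcon
        push_neg at hcon
        exact absurd (Real.sin_nonneg_of_nonneg_of_le_pi hB0 hcon) (not_le.mpr hsb)
      have hsa1 : -1 ≤ Real.sin A := Real.neg_one_le_sin A
      have hsb1 : -1 ≤ Real.sin B := Real.neg_one_le_sin B
      have hsasb : Real.sin A * Real.sin B ≤ 1 := by nlinarith
      have hpq0 : 0 ≤ p*q := mul_nonneg hp0 hq0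
      have l1 : (p*q) * (Real.sin A * Real.sin B) ≤ p*q := by nlinarith
      have hjp : 2/π * p ≤ Real.sin p := Real.mul_le_sin hp0 hpπ
      have hjq : 2/π * q ≤ Real.sin q := Real.mul_le_sin hq0 hqπ
      have hj2 : (2/π*p) * (2/π*q) ≤ Real.sin p * Real.sin q :=
        mul_le_mul hjp hjq (by positivity) hsp
      have hj3 : π^2 * ((2/π*p) * (2/π*q)) ≤ π^2 * (Real.sin p * Real.sin q) :=
        mul_le_mul_of_nonneg_left hj2 (by positivity)
      have hj4 : π^2 * ((2/π*p) * (2/π*q)) = 4*(p*q) := by field_simp; ring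
      have hsps : 0 ≤ Real.sin p * Real.sin q := mul_nonneg hsp hsq
      have hππ : π^2 ≤ A*B := by nlinarith
      have l2 : π^2 * (Real.sin p * Real.sin q) ≤ (A*B) * (Real.sin p * Real.sin q) :=
        mul_le_mul_of_nonneg_right hππ hsps
      linarith

lemma sq_le_imp (a b : ℝ) (ha : 0 ≤ a) (hb : 0 ≤ b) (h : a^2 ≤ b^2) : a ≤ b := by
  nlinarith

set_option maxHeartbeats 1000000 in
lemma trig_compare_aux (α β c D : ℝ) (hβ0 : 0 ≤ β) (hβα : β ≤ α) (hc : |c| ≤ 1)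
    (hD0 : 0 ≤ D) (hDπ : D ≤ π/2) (hDsq : D^2 = α^2 + β^2 - 2*α*β*c) :
    Real.cos D ≤ Real.cos α * Real.cos β + c * (Real.sin α * Real.sin β) := by
  have hπ := Real.pi_pos
  have hα0 : 0 ≤ α := hβ0.trans hβα
  have hc1 := (abs_le.mp hc).2
  have hc2 := (abs_le.mp hc).1
  have habc : 0 ≤ α*β*(1-c) := mul_nonneg (mul_nonneg hα0 hβ0) (by linarith)
  have habc' : 0 ≤ α*β*(1+c) := mul_nonneg (mul_nonneg hα0 hβ0) (by linarith)
  have hm0 : 0 ≤ α - β := by linarith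
  have hDm2 : (α-β)^2 ≤ D^2 := by
    have e : D^2 - (α-β)^2 = 2*(α*β*(1-c)) := by linear_combination hDsq
    linarith
  have hmD : α - β ≤ D := sq_le_imp _ _ hm0 hD0 hDm2
  have hDs2 : D^2 ≤ (α+β)^2 := by
    have e : (α+β)^2 - D^2 = 2*(α*β*(1+c)) := by linear_combination -hDsq
    linarith
  have hDs : D ≤ α + β := sq_le_imp _ _ hD0 (by linarith) hDs2
  have hq0 : 0 ≤ (D - (α-β))/2 := by linarith
  have hp0 : 0 ≤ (D + (α-β))/2 := by linarith
  have hpπ : (D + (α-β))/2 ≤ π/2 := by linarith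
  have hqπ : (D - (α-β))/2 ≤ π/2 := by linarith
  have hpα : (D + (α-β))/2 ≤ α := by linarith
  have hqβ : (D - (α-β))/2 ≤ β := by linarith
  have hsp : 0 ≤ Real.sin ((D + (α-β))/2) :=
    Real.sin_nonneg_of_nonneg_of_le_pi hp0 (by linarith)
  have hsq' : 0 ≤ Real.sin ((D - (α-β))/2) :=
    Real.sin_nonneg_of_nonneg_of_le_pi hq0 (by linarith)
  have hid : Real.cos (α-β) - Real.cos D
      = 2 * Real.sin ((D + (α-β))/2) * Real.sin ((D - (α-β))/2) := by
    rw [Real.cos_sub_cos, show ((α-β) + D)/2 = (D + (α-β))/2 by ring,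
      show ((α-β) - D)/2 = -((D - (α-β))/2) by ring, Real.sin_neg]
    ring
  have hid2 : Real.cos α * Real.cos β + c * (Real.sin α * Real.sin β)
      = Real.cos (α-β) - (1 - c) * (Real.sin α * Real.sin β) := by
    rw [Real.cos_sub]; ring
  have hpq : 2*(((D + (α-β))/2)*((D - (α-β))/2)) = α*β*(1-c) := by
    linear_combination hDsq / 2
  have hgoal : (1 - c) * (Real.sin α * Real.sin β)
      ≤ 2 * Real.sin ((D + (α-β))/2) * Real.sin ((D - (α-β))/2) := by
    rcases eq_or_lt_of_le hβ0 with hβz | hβpos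
    · rw [show Real.sin β = 0 by rw [← hβz]; simp]
      nlinarith [mul_nonneg hsp hsq']
    · have hαpos : 0 < α := lt_of_lt_of_le hβpos hβα
      have hkey := key_prod ((D + (α-β))/2) ((D - (α-β))/2) α β hp0 hq0 hpπ hqπ hpα hqβ
      have hx : α*β*((1-c)*(Real.sin α*Real.sin β))
          ≤ α*β*(2 * Real.sin ((D + (α-β))/2) * Real.sin ((D - (α-β))/2)) := by
        have e1 : α*β*((1-c)*(Real.sin α*Real.sin β))
            = 2*((((D + (α-β))/2)*((D - (α-β))/2)) * (Real.sin α*Real.sin β)) := by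
          linear_combination (Real.sin α*Real.sin β) * hpq
            - (Real.sin α*Real.sin β) * hDsq
        rw [e1]
        linarith [hkey]
      exact le_of_mul_le_mul_left hx (mul_pos hαpos hβpos)
  rw [hid2]
  linarith

lemma trig_compare (α β c D : ℝ) (hα0 : 0 ≤ α) (hβ0 : 0 ≤ β) (hc : |c| ≤ 1)
    (hD0 : 0 ≤ D) (hDπ : D ≤ π/2) (hDsq : D^2 = α^2 + β^2 - 2*α*β*c) :
    Real.cos D ≤ Real.cos α * Real.cos β + c * (Real.sin α * Real.sin β) := by
  rcases le_total β α with h | h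
  · exact trig_compare_aux α β c D hβ0 h hc hD0 hDπ hDsq
  · have h2 := trig_compare_aux β α c D hα0 h hc hD0 hDπ (by linear_combination hDsq)
    linarith

end TrimAux
namespace TrimAux

lemma rot_dist (a b xx : E3) :
    ‖mApp (rotOf b) xx - mApp (rotOf a) xx‖
      ≤ 2 * Real.sin (min (‖b - a‖/2) (π/2)) * ‖xx‖ := by
  have hπ := Real.pi_pos
  rcases le_or_gt (‖b - a‖/2) (π/2) with hle | hgt
  · rw [min_eq_left hle]
    have hδ0 : (0:ℝ) ≤ ‖b - a‖/2 := by positivity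
    have hcos0 : 0 ≤ Real.cos (‖b - a‖/2) :=
      Real.cos_nonneg_of_mem_Icc ⟨by linarith, hle⟩
    have hba : (inner ℝ b a : ℝ)
        = ‖a‖ * ‖b‖ * (inner ℝ (axisOf a) (axisOf b) : ℝ) := by
      rw [real_inner_comm]; exact axis_inner a b
    have hDsq : (‖b - a‖/2)^2
        = (‖a‖/2)^2 + (‖b‖/2)^2 - 2*(‖a‖/2)*(‖b‖/2)*(inner ℝ (axisOf a) (axisOf b) : ℝ) := by
      linear_combination (norm_sub_sq_real b a)/4 - hba/2
    have hcabs : |(inner ℝ (axisOf a) (axisOf b) : ℝ)| ≤ 1 := by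
      have h := abs_real_inner_le_norm (axisOf a) (axisOf b)
      rwa [axis_norm, axis_norm, one_mul] at h
    have hw := trig_compare (‖a‖/2) (‖b‖/2) (inner ℝ (axisOf a) (axisOf b) : ℝ) (‖b - a‖/2)
      (by positivity) (by positivity) hcabs hδ0 hle hDsq
    set w : ℝ := Real.cos (‖a‖/2) * Real.cos (‖b‖/2)
      + (inner ℝ (axisOf a) (axisOf b) : ℝ) * (Real.sin (‖a‖/2) * Real.sin (‖b‖/2)) with hwdef
    have hwsq : Real.cos (‖b - a‖/2)^2 ≤ w^2 := by nlinarith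
    have hid := rot_inner_eq a b xx
    have hsub : ‖mApp (rotOf b) xx - mApp (rotOf a) xx‖^2
        = 2*‖xx‖^2 - 2*(inner ℝ (mApp (rotOf a) xx) (mApp (rotOf b) xx) : ℝ) := by
      have h1 := norm_sub_sq_real (mApp (rotOf b) xx) (mApp (rotOf a) xx)
      rw [rot_norm, rot_norm, real_inner_comm] at h1
      linarith
    have hsin2 := Real.sin_sq (‖b - a‖/2)
    have hVsq : 0 ≤ (Real.cos (‖a‖/2) * Real.sin (‖b‖/2) * (inner ℝ (axisOf b) xx : ℝ)
          - Real.sin (‖a‖/2) * Real.cos (‖b‖/2) * (inner ℝ (axisOf a) xx : ℝ)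
          - Real.sin (‖a‖/2) * Real.sin (‖b‖/2)
              * (inner ℝ (capp (axisOf a) (axisOf b)) xx : ℝ))^2 := sq_nonneg _
    have hfin : ‖mApp (rotOf b) xx - mApp (rotOf a) xx‖^2
        ≤ (2 * Real.sin (‖b - a‖/2) * ‖xx‖)^2 := by
      have hx2 : (0:ℝ) ≤ ‖xx‖^2 := sq_nonneg _
      have hmul := mul_le_mul_of_nonneg_right hwsq hx2
      nlinarith [hid, hsub]
    have hrhs0 : 0 ≤ 2 * Real.sin (‖b - a‖/2) * ‖xx‖ := by
      have := Real.sin_nonneg_of_nonneg_of_le_pi hδ0 (by linarith)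
      positivity
    exact sq_le_imp _ _ (norm_nonneg _) hrhs0 hfin
  · rw [min_eq_right hgt.le, Real.sin_pi_div_two]
    calc ‖mApp (rotOf b) xx - mApp (rotOf a) xx‖
        ≤ ‖mApp (rotOf b) xx‖ + ‖mApp (rotOf a) xx‖ := norm_sub_le _ _
      _ = 2 * 1 * ‖xx‖ := by rw [rot_norm, rot_norm]; ring

lemma cube_norm (u : E3) (σ : ℝ) (h : ∀ k, |u k| ≤ σ) : ‖u‖ ≤ Real.sqrt 3 * σ := by
  have hσ : 0 ≤ σ := (abs_nonneg _).trans (h 0)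
  have hk : ∀ k, u k ^ 2 ≤ σ^2 := by
    intro k
    have h1 := h k
    have h2 := abs_nonneg (u k)
    nlinarith [le_abs_self (u k), neg_abs_le (u k)]
  have h2 : ‖u‖^2 ≤ 3*σ^2 := by
    rw [normsq]
    linarith [hk 0, hk 1, hk 2]
  calc ‖u‖ = Real.sqrt (‖u‖^2) := (Real.sqrt_sq (norm_nonneg u)).symm
    _ ≤ Real.sqrt (3*σ^2) := Real.sqrt_le_sqrt h2
    _ = Real.sqrt 3 * σ := by
        rw [Real.sqrt_mul (by norm_num), Real.sqrt_sq hσ]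

end TrimAux

theorem trimmed_l2_error_lower_bound
    (Y : Finset (EuclideanSpace ℝ (Fin 3))) (hY : Y.Nonempty)
    (N K : ℕ) (hK1 : 1 ≤ K) (hKN : K ≤ N)
    (x : Fin N → EuclideanSpace ℝ (Fin 3))
    (r₀ t₀ : EuclideanSpace ℝ (Fin 3)) (σr σt : ℝ) (hσr : 0 ≤ σr) (hσt : 0 ≤ σt)
    (r t : EuclideanSpace ℝ (Fin 3))
    (hr : ∀ k, |r k - r₀ k| ≤ σr) (ht : ∀ k, |t k - t₀ k| ≤ σt) :
    let e : Fin N → EuclideanSpace ℝ (Fin 3) → EuclideanSpace ℝ (Fin 3) → ℝ :=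
      fun i r t => Y.inf' hY fun y => ‖mApp (rotOf r) (x i) + t - y‖
    let γr : Fin N → ℝ :=
      fun i => 2 * Real.sin (min (Real.sqrt 3 * σr / 2) (Real.pi / 2)) * ‖x i‖
    let γt : ℝ := Real.sqrt 3 * σt
    let ℓ : Fin N → ℝ := fun i => max (e i r₀ t₀ - (γr i + γt)) 0
    let hne : ((Finset.univ : Finset (Fin N)).powersetCard K).Nonempty :=
      Finset.powersetCard_nonempty.mpr (by simpa using hKN)
    ((Finset.univ : Finset (Fin N)).powersetCard K).inf'
        hne (fun Q => ∑ i ∈ Q, (ℓ i) ^ 2)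
      ≤ ((Finset.univ : Finset (Fin N)).powersetCard K).inf'
        hne (fun S => ∑ i ∈ S, (e i r t) ^ 2) := by
  intro e γr γt ℓ hne
  obtain ⟨S, hS, hSval⟩ := Finset.exists_mem_eq_inf' hne (fun S => ∑ i ∈ S, (e i r t)^2)
  rw [hSval]
  refine le_trans (Finset.inf'_le _ hS) (Finset.sum_le_sum ?_)
  intro i _
  have he0 : 0 ≤ e i r t := Finset.le_inf' hY _ (fun y _ => norm_nonneg _)
  obtain ⟨y, hy, hyv⟩ := Finset.exists_mem_eq_inf' hY
    (fun y => ‖mApp (rotOf r) (x i) + t - y‖)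
  have h1 : e i r₀ t₀ ≤ ‖mApp (rotOf r₀) (x i) + t₀ - y‖ := Finset.inf'_le _ hy
  have hsplit : mApp (rotOf r₀) (x i) + t₀ - y
      = (mApp (rotOf r) (x i) + t - y)
        + ((mApp (rotOf r₀) (x i) - mApp (rotOf r) (x i)) + (t₀ - t)) := by abel
  have tri : ‖mApp (rotOf r₀) (x i) + t₀ - y‖
      ≤ ‖mApp (rotOf r) (x i) + t - y‖
        + (‖mApp (rotOf r₀) (x i) - mApp (rotOf r) (x i)‖ + ‖t₀ - t‖) := by
    rw [hsplit]
    exact (norm_add_le _ _).trans (add_le_add le_rfl (norm_add_le _ _))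
  have hδ : ‖r₀ - r‖ ≤ Real.sqrt 3 * σr := by
    apply TrimAux.cube_norm
    intro k
    have hco : (r₀ - r) k = r₀ k - r k := rfl
    rw [hco, abs_sub_comm]
    exact hr k
  have hd := TrimAux.rot_dist r r₀ (x i)
  have hmono : Real.sin (min (‖r₀ - r‖/2) (π/2))
      ≤ Real.sin (min (Real.sqrt 3 * σr / 2) (π/2)) := by
    apply Real.sin_le_sin_of_le_of_le_pi_div_two
    · have hge : (0:ℝ) ≤ min (‖r₀ - r‖/2) (π/2) :=
        le_min (by positivity) (by positivity)
      linarith [Real.pi_pos]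
    · exact min_le_right _ _
    · exact min_le_min (by linarith) le_rfl
  have hrot : ‖mApp (rotOf r₀) (x i) - mApp (rotOf r) (x i)‖ ≤ γr i := by
    refine hd.trans ?_
    have hm := mul_le_mul_of_nonneg_right hmono (norm_nonneg (x i))
    show _ ≤ 2 * Real.sin (min (Real.sqrt 3 * σr / 2) (Real.pi / 2)) * ‖x i‖
    linarith
  have htr : ‖t₀ - t‖ ≤ γt := by
    show ‖t₀ - t‖ ≤ Real.sqrt 3 * σt
    apply TrimAux.cube_norm
    intro k
    have hco : (t₀ - t) k = t₀ k - t k := rfl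
    rw [hco, abs_sub_comm]
    exact ht k
  have hkey : e i r₀ t₀ - (γr i + γt) ≤ e i r t := by
    have hev : e i r t = ‖mApp (rotOf r) (x i) + t - y‖ := hyv
    rw [hev]
    linarith
  have hle : ℓ i ≤ e i r t := max_le hkey he0
  have h0 : 0 ≤ ℓ i := le_max_right _ _
  exact pow_le_pow_left₀ h0 hle 2
end

section
/- (Double angle-axis representation on the surface of the π-ball) For every r ∈ ℝ³ with ‖r‖ = π, the two antipodal angle-axis vectors r and −r represent the same rotation: exp([r]ₓ) = exp([−r]ₓ). -/
open Matrix Real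

set_option maxHeartbeats 1000000 in
theorem antipodal_angle_axis_same_rotation (r : EuclideanSpace ℝ (Fin 3))
    (hr : ‖r‖ = Real.pi) :
    NormedSpace.exp (crossMat r) = NormedSpace.exp (crossMat (-r)) := by
  letI : SeminormedRing (Matrix (Fin 3) (Fin 3) ℝ) := Matrix.linftyOpSemiNormedRing
  letI : NormedRing (Matrix (Fin 3) (Fin 3) ℝ) := Matrix.linftyOpNormedRing
  letI : NormedAlgebra ℝ (Matrix (Fin 3) (Fin 3) ℝ) := Matrix.linftyOpNormedAlgebra
  set K := crossMat r with hK
  have hneg : crossMat (-r) = -K := by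
    ext i j
    fin_cases i <;> fin_cases j <;> simp [crossMat, hK]
  have h : (r 0)^2 + (r 1)^2 + (r 2)^2 = π^2 := by
    have h1 : ‖r‖^2 = π^2 := by rw [hr]
    rw [EuclideanSpace.norm_eq, Real.sq_sqrt (by positivity)] at h1
    simpa [Fin.sum_univ_three, Real.norm_eq_abs, sq_abs] using h1
  have hK3 : K ^ 3 = (-(π^2)) • K := by
    have h3 : K ^ 3 = K * K * K := by rw [pow_succ, pow_two]
    rw [h3, hK]
    ext i j
    simp only [crossMat, Matrix.mul_fin_three]
    fin_cases i <;> fin_cases j <;> simp [Matrix.smul_apply] <;> ring_nf <;>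
      first
        | rfl
        | linear_combination (r 0) * h
        | linear_combination (r 1) * h
        | linear_combination (r 2) * h
        | linear_combination (-(r 0)) * h
        | linear_combination (-(r 1)) * h
        | linear_combination (-(r 2)) * h
  have hodd : ∀ k : ℕ, K ^ (2*k+1) = ((-(π^2))^k) • K := by
    intro k
    induction k with
    | zero => simp
    | succ n ih =>
      have he : 2*(n+1)+1 = (2*n+1) + 2 := by ring
      have he2 : K * K ^ 2 = K ^ 3 := by rw [pow_two, ← mul_assoc, pow_succ, pow_two]
      rw [he, pow_add, ih, smul_mul_assoc, he2, hK3, smul_smul, ← pow_succ]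
  -- the odd-part scalar series sums to `sin π / π = 0`
  have hc : HasSum (fun k : ℕ => ((((2*k+1).factorial : ℝ))⁻¹ * (-(π^2))^k)) 0 := by
    have h0 := (Real.hasSum_sin π).div_const π
    rw [Real.sin_pi, zero_div] at h0
    convert h0 using 1
    · rfl
    funext k
    have hp : (-(π^2))^k = (-1)^k * π^(2*k) := by
      rw [← neg_one_mul, mul_pow, pow_mul]
    rw [hp]
    have hq : π ^ (2*k+1) = π^(2*k) * π := by ring
    rw [hq]
    field_simp
  have hO : HasSum (fun k : ℕ => (((2*k+1).factorial : ℝ))⁻¹ • K ^ (2*k+1)) 0 := by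
    have := hc.smul_const K
    rw [zero_smul] at this
    convert this using 1
    funext k
    rw [hodd k, smul_smul]
  have hO' : HasSum (fun k : ℕ => (((2*k+1).factorial : ℝ))⁻¹ • (-K) ^ (2*k+1)) 0 := by
    have := (hc.neg).smul_const K
    rw [neg_zero, zero_smul] at this
    convert this using 1
    funext k
    rw [Odd.neg_pow ⟨k, by ring⟩, hodd k, smul_neg, smul_smul, ← neg_smul]
  have hs := NormedSpace.norm_expSeries_summable' (𝕂 := ℝ) K
  have hEs : Summable (fun k : ℕ => (((2*k).factorial : ℝ))⁻¹ • K ^ (2*k)) :=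
    Summable.of_norm (hs.comp_injective (fun a b hab => by omega))
  have hE' : (fun k : ℕ => (((2*k).factorial : ℝ))⁻¹ • (-K) ^ (2*k))
      = fun k : ℕ => (((2*k).factorial : ℝ))⁻¹ • K ^ (2*k) := by
    funext k
    rw [Even.neg_pow ⟨k, by ring⟩]
  have hEs' : Summable (fun k : ℕ => (((2*k).factorial : ℝ))⁻¹ • (-K) ^ (2*k)) := by
    rw [hE']; exact hEs
  have h1 : HasSum (fun n : ℕ => ((n.factorial : ℝ))⁻¹ • K ^ n)
      (∑' k : ℕ, (((2*k).factorial : ℝ))⁻¹ • K ^ (2*k)) := by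
    have := HasSum.even_add_odd
      (f := fun n : ℕ => ((n.factorial : ℝ))⁻¹ • K ^ n) hEs.hasSum hO
    rwa [add_zero] at this
  have h2 : HasSum (fun n : ℕ => ((n.factorial : ℝ))⁻¹ • (-K) ^ n)
      (∑' k : ℕ, (((2*k).factorial : ℝ))⁻¹ • K ^ (2*k)) := by
    have := HasSum.even_add_odd
      (f := fun n : ℕ => ((n.factorial : ℝ))⁻¹ • (-K) ^ n) hEs'.hasSum hO'
    rw [add_zero] at this
    rwa [hE'] at this
  have e1 : NormedSpace.exp K = ∑' k : ℕ, (((2*k).factorial : ℝ))⁻¹ • K ^ (2*k) := by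
    rw [NormedSpace.exp_eq_tsum (𝕂 := ℝ)]
    exact h1.tsum_eq
  have e2 : NormedSpace.exp (-K) = ∑' k : ℕ, (((2*k).factorial : ℝ))⁻¹ • K ^ (2*k) := by
    rw [NormedSpace.exp_eq_tsum (𝕂 := ℝ)]
    exact h2.tsum_eq
  rw [hneg, e1, e2]
end
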